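/- Lower bound on the Laplacian spectral width (Lemma 8): let w ∈ ℝ^N with w_i ≥ 0 for all i and Σ_{i=1}^N w_i = c, and set M := max(λmax(L1), λmax(L2)). Then λn(L(w)) − λ2(L(w)) ≥ M − 2c/N. If equality holds, then necessarily λn(L(w)) = M and λ2(L(w)) = 2c/N. Moreover, if in addition λmax(L1) ≥ λmax(L2), φ ∈ ℝ^N satisfies L1·φ = λmax(L1)·φ with φ_i ≠ 0 for every i, and c > 0, then the inequality is strict: λn(L(w)) − λ2(L(w)) > M − 2c/N. -/

import Mathlib

open Matrix

/-- Eigenvalues of a real symmetric matrix, listed in nondecreasing order with multiplicity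
(junk value `0` if the matrix is not Hermitian). -/
noncomputable def sortedEigs {m : ℕ} (A : Matrix (Fin m) (Fin m) ℝ) : Fin m → ℝ :=
  if hA : A.IsHermitian then fun k => hA.eigenvalues (Tuple.sort hA.eigenvalues k) else 0

/-- The supra-Laplacian `L(w) = [[L1 + W, -W], [-W, L2 + W]]` of a two-layer multiplex,
as a matrix indexed by `Fin (N + N)`. -/
noncomputable def supraLap {N : ℕ} (L1 L2 : Matrix (Fin N) (Fin N) ℝ) (w : Fin N → ℝ) :
    Matrix (Fin (N + N)) (Fin (N + N)) ℝ :=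
  Matrix.reindex finSumFinEquiv finSumFinEquiv
    (Matrix.fromBlocks (L1 + Matrix.diagonal w) (-(Matrix.diagonal w))
      (-(Matrix.diagonal w)) (L2 + Matrix.diagonal w))

section Helpers

variable {m : ℕ} {A : Matrix (Fin m) (Fin m) ℝ}

lemma star_eq_transpose_real (M : Matrix (Fin m) (Fin m) ℝ) : star M = Mᵀ := by
  ext i j; simp [Matrix.star_apply]

lemma herm_dot_self (hA : A.IsHermitian) (v : Fin m → ℝ) :
    v ⬝ᵥ v = ∑ k, (((star (hA.eigenvectorUnitary : Matrix (Fin m) (Fin m) ℝ)) *ᵥ v) k) ^ 2 := by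
  have hU : (hA.eigenvectorUnitary : Matrix (Fin m) (Fin m) ℝ)
      * star (hA.eigenvectorUnitary : Matrix (Fin m) (Fin m) ℝ) = 1 :=
    (Matrix.mem_unitaryGroup_iff).mp (hA.eigenvectorUnitary).2
  set U := (hA.eigenvectorUnitary : Matrix (Fin m) (Fin m) ℝ) with hUdef
  have : (star U *ᵥ v) ⬝ᵥ (star U *ᵥ v) = v ⬝ᵥ v := by
    rw [dotProduct_mulVec, star_eq_transpose_real, vecMul_transpose, mulVec_mulVec,
      ← star_eq_transpose_real, hU, one_mulVec]
  rw [← this]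
  simp [dotProduct, sq]

lemma herm_quad (hA : A.IsHermitian) (v : Fin m → ℝ) :
    v ⬝ᵥ (A *ᵥ v) = ∑ k, hA.eigenvalues k *
      ((((star (hA.eigenvectorUnitary : Matrix (Fin m) (Fin m) ℝ)) *ᵥ v) k) ^ 2) := by
  set U := (hA.eigenvectorUnitary : Matrix (Fin m) (Fin m) ℝ) with hUdef
  conv_lhs => rw [hA.spectral_theorem, Unitary.conjStarAlgAut_apply]
  rw [← mulVec_mulVec, ← mulVec_mulVec, dotProduct_mulVec (A := U),
    ← mulVec_transpose, ← star_eq_transpose_real]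
  simp [dotProduct, mulVec_diagonal, sq]
  exact Finset.sum_congr rfl fun k _ => by ring

lemma sortedEigs_apply (hA : A.IsHermitian) (k : Fin m) :
    sortedEigs A k = hA.eigenvalues (Tuple.sort hA.eigenvalues k) := by
  rw [sortedEigs, dif_pos hA]

lemma eig_le_max (hA : A.IsHermitian) (hm : 0 < m) (k : Fin m) :
    hA.eigenvalues k ≤ sortedEigs A ⟨m - 1, by omega⟩ := by
  obtain ⟨j, hj⟩ : ∃ j, (Tuple.sort hA.eigenvalues) j = k :=
    ⟨(Tuple.sort hA.eigenvalues).symm k, by simp⟩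
  rw [sortedEigs_apply hA, ← hj]
  exact Tuple.monotone_sort hA.eigenvalues (by simp [Fin.le_def]; omega)

lemma quad_le_max (hA : A.IsHermitian) (hm : 0 < m) (v : Fin m → ℝ) :
    v ⬝ᵥ (A *ᵥ v) ≤ sortedEigs A ⟨m - 1, by omega⟩ * (v ⬝ᵥ v) := by
  rw [herm_quad hA v, herm_dot_self hA v, Finset.mul_sum]
  exact Finset.sum_le_sum fun k _ => mul_le_mul_of_nonneg_right (eig_le_max hA hm k) (sq_nonneg _)

lemma dot_self_nonneg (v : Fin m → ℝ) : 0 ≤ v ⬝ᵥ v :=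
  Finset.sum_nonneg fun _ _ => mul_self_nonneg _

lemma lt_max_of_quad (hA : A.IsHermitian) (hm : 0 < m) (v : Fin m → ℝ) (t : ℝ)
    (h : t * (v ⬝ᵥ v) < v ⬝ᵥ (A *ᵥ v)) : t < sortedEigs A ⟨m - 1, by omega⟩ := by
  by_contra hcon; push_neg at hcon
  have h1 := quad_le_max hA hm v
  have h2 := dot_self_nonneg v
  nlinarith

lemma second_le (hA : A.IsHermitian) (hm : 1 < m) (v1 v2 : Fin m → ℝ)
    (hind : ∀ a b : ℝ, a • v1 + b • v2 = 0 → a = 0 ∧ b = 0) (t : ℝ)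
    (hR : ∀ a b : ℝ,
      (a • v1 + b • v2) ⬝ᵥ (A *ᵥ (a • v1 + b • v2)) ≤
        t * ((a • v1 + b • v2) ⬝ᵥ (a • v1 + b • v2))) :
    sortedEigs A ⟨1, hm⟩ ≤ t := by
  by_contra hc; push_neg at hc
  set σ := Tuple.sort hA.eigenvalues with hσ
  set k0 := σ ⟨0, by omega⟩ with hk0
  have hgt : ∀ k, k ≠ k0 → t < hA.eigenvalues k := by
    intro k hk
    obtain ⟨j, hj⟩ : ∃ j, σ j = k := ⟨σ.symm k, by simp⟩
    have hj1 : (⟨1, hm⟩ : Fin m) ≤ j := by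
      have : j ≠ ⟨0, by omega⟩ := fun h => hk (by rw [← hj, h, hk0])
      simp [Fin.le_def]
      have := Fin.val_ne_of_ne this
      simp at this
      omega
    calc t < sortedEigs A ⟨1, hm⟩ := hc
      _ = hA.eigenvalues (σ ⟨1, hm⟩) := sortedEigs_apply hA _
      _ ≤ hA.eigenvalues (σ j) := Tuple.monotone_sort hA.eigenvalues hj1
      _ = _ := by rw [hj]
  set u : Fin m → ℝ := fun i => (hA.eigenvectorUnitary : Matrix (Fin m) (Fin m) ℝ) i k0 with hu
  obtain ⟨a, b, hv0, hu0⟩ : ∃ a b : ℝ, a • v1 + b • v2 ≠ 0 ∧ u ⬝ᵥ (a • v1 + b • v2) = 0 := by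
    by_cases hα : u ⬝ᵥ v1 = 0
    · refine ⟨1, 0, fun h => one_ne_zero ((hind 1 0 h).1), ?_⟩
      simp [dotProduct_add, dotProduct_smul, hα]
    · refine ⟨u ⬝ᵥ v2, -(u ⬝ᵥ v1), fun h => hα ?_, ?_⟩
      · have := (hind _ _ h).2; linarith [neg_eq_zero.mp this]
      · simp [dotProduct_add, dotProduct_smul, smul_eq_mul]; ring
  set v := a • v1 + b • v2 with hv
  have hy0 : ((star (hA.eigenvectorUnitary : Matrix (Fin m) (Fin m) ℝ)) *ᵥ v) k0 = 0 := by
    rw [← hu0]; simp [mulVec, dotProduct, Matrix.star_apply, hu]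
  have hvv : 0 < v ⬝ᵥ v :=
    lt_of_le_of_ne (dot_self_nonneg v) (fun h => hv0 ((dotProduct_self_eq_zero).mp h.symm))
  have hkey : t * (v ⬝ᵥ v) < v ⬝ᵥ (A *ᵥ v) := by
    obtain ⟨k1, hk1⟩ : ∃ k1,
        ((star (hA.eigenvectorUnitary : Matrix (Fin m) (Fin m) ℝ)) *ᵥ v) k1 ≠ 0 := by
      by_contra hall; push_neg at hall
      rw [herm_dot_self hA v] at hvv
      simp [hall] at hvv
    have hk1k0 : k1 ≠ k0 := fun h => hk1 (h ▸ hy0)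
    rw [herm_quad hA v, herm_dot_self hA v, Finset.mul_sum]
    apply Finset.sum_lt_sum
    · intro k _
      rcases eq_or_ne k k0 with h | h
      · subst h; rw [hy0]; simp
      · exact mul_le_mul_of_nonneg_right (le_of_lt (hgt k h)) (sq_nonneg _)
    · exact ⟨k1, Finset.mem_univ _,
        mul_lt_mul_of_pos_right (hgt k1 hk1k0) (by positivity)⟩
  exact absurd (hR a b) (not_le.mpr hkey)

lemma exists_top_eigvec (hA : A.IsHermitian) (hm : 0 < m) :
    ∃ u : Fin m → ℝ, A *ᵥ u = sortedEigs A ⟨m - 1, by omega⟩ • u ∧ u ⬝ᵥ u = 1 := by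
  set j := Tuple.sort hA.eigenvalues ⟨m - 1, by omega⟩ with hj
  refine ⟨⇑(hA.eigenvectorBasis j), ?_, ?_⟩
  · rw [sortedEigs_apply hA]; exact hA.mulVec_eigenvectorBasis j
  · have h := hA.eigenvectorBasis.orthonormal.1 j
    have h2 : (⇑(hA.eigenvectorBasis j) : Fin m → ℝ) ⬝ᵥ ⇑(hA.eigenvectorBasis j)
        = ‖hA.eigenvectorBasis j‖ ^ 2 := by
      rw [← real_inner_self_eq_norm_sq]
      simp only [PiLp.inner_apply, dotProduct]
      simp [sq]
    rw [h2, h]; norm_num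

end Helpers

section Supra

def pairVec {N : ℕ} (x y : Fin N → ℝ) : Fin (N + N) → ℝ :=
  Sum.elim x y ∘ (finSumFinEquiv (m := N) (n := N)).symm

variable {N : ℕ} {L1 L2 : Matrix (Fin N) (Fin N) ℝ} {w : Fin N → ℝ}

lemma pairVec_dot (x y x' y' : Fin N → ℝ) :
    pairVec x y ⬝ᵥ pairVec x' y' = x ⬝ᵥ x' + y ⬝ᵥ y' := by
  unfold pairVec dotProduct
  rw [← Equiv.sum_comp (finSumFinEquiv (m := N) (n := N))
    (fun i => (Sum.elim x y ∘ finSumFinEquiv.symm) i * (Sum.elim x' y' ∘ finSumFinEquiv.symm) i)]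
  simp [Fintype.sum_sum_type]

lemma pairVec_smul (a : ℝ) (x y : Fin N → ℝ) : a • pairVec x y = pairVec (a • x) (a • y) := by
  funext i
  unfold pairVec
  rcases h : (finSumFinEquiv (m := N) (n := N)).symm i with j | j <;> simp [h]

lemma pairVec_add (x y x' y' : Fin N → ℝ) :
    pairVec x y + pairVec x' y' = pairVec (x + x') (y + y') := by
  funext i
  unfold pairVec
  rcases h : (finSumFinEquiv (m := N) (n := N)).symm i with j | j <;> simp [h]

lemma pairVec_eq_zero {x y : Fin N → ℝ} (h : pairVec x y = 0) : x = 0 ∧ y = 0 := by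
  constructor <;> funext j
  · have := congr_fun h (finSumFinEquiv (Sum.inl j))
    simp only [pairVec, Function.comp_apply, Equiv.symm_apply_apply, Sum.elim_inl,
      Pi.zero_apply] at this
    exact this
  · have := congr_fun h (finSumFinEquiv (Sum.inr j))
    simp only [pairVec, Function.comp_apply, Equiv.symm_apply_apply, Sum.elim_inr,
      Pi.zero_apply] at this
    exact this

lemma supraLap_mulVec (x y : Fin N → ℝ) :
    supraLap L1 L2 w *ᵥ pairVec x y =
      pairVec ((L1 + Matrix.diagonal w) *ᵥ x + (-(Matrix.diagonal w)) *ᵥ y)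
        ((-(Matrix.diagonal w)) *ᵥ x + (L2 + Matrix.diagonal w) *ᵥ y) := by
  unfold supraLap pairVec
  rw [Matrix.reindex_apply, Matrix.submatrix_mulVec_equiv]
  congr 1
  rw [Equiv.symm_symm, Function.comp_assoc, Equiv.symm_comp_self, Function.comp_id,
    fromBlocks_mulVec]
  simp [Sum.elim_comp_inl, Sum.elim_comp_inr]

lemma supraLap_quad (x y : Fin N → ℝ) :
    pairVec x y ⬝ᵥ (supraLap L1 L2 w *ᵥ pairVec x y) =
      x ⬝ᵥ (L1 *ᵥ x) + y ⬝ᵥ (L2 *ᵥ y) + ∑ i, w i * (x i - y i) ^ 2 := by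
  have hdiag : ∀ z z' : Fin N → ℝ,
      z ⬝ᵥ (Matrix.diagonal w *ᵥ z') = ∑ i, w i * (z i * z' i) := by
    intro z z'
    simp only [dotProduct, mulVec_diagonal]
    exact Finset.sum_congr rfl fun i _ => by ring
  rw [supraLap_mulVec, pairVec_dot]
  have e1 : x ⬝ᵥ ((L1 + Matrix.diagonal w) *ᵥ x + (-(Matrix.diagonal w)) *ᵥ y) =
      x ⬝ᵥ (L1 *ᵥ x) + (∑ i, w i * (x i * x i) - ∑ i, w i * (x i * y i)) := by
    rw [dotProduct_add, add_mulVec, dotProduct_add, neg_mulVec, dotProduct_neg, hdiag, hdiag]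
    ring
  have e2 : y ⬝ᵥ ((-(Matrix.diagonal w)) *ᵥ x + (L2 + Matrix.diagonal w) *ᵥ y) =
      y ⬝ᵥ (L2 *ᵥ y) + (∑ i, w i * (y i * y i) - ∑ i, w i * (y i * x i)) := by
    rw [dotProduct_add, add_mulVec, dotProduct_add, neg_mulVec, dotProduct_neg, hdiag, hdiag]
    ring
  rw [e1, e2]
  have e3 : (∑ i, w i * (x i * x i) - ∑ i, w i * (x i * y i)) +
      (∑ i, w i * (y i * y i) - ∑ i, w i * (y i * x i)) = ∑ i, w i * (x i - y i) ^ 2 := by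
    rw [← Finset.sum_sub_distrib, ← Finset.sum_sub_distrib, ← Finset.sum_add_distrib]
    exact Finset.sum_congr rfl fun i _ => by ring
  linarith [e3]

lemma supraLap_isHermitian (hL1 : L1.IsHermitian) (hL2 : L2.IsHermitian) :
    (supraLap L1 L2 w).IsHermitian := by
  unfold supraLap
  rw [Matrix.reindex_apply]
  apply Matrix.IsHermitian.submatrix
  unfold Matrix.IsHermitian
  have ht1 : L1ᵀ = L1 := by rw [← star_eq_transpose_real]; exact hL1.eq
  have ht2 : L2ᵀ = L2 := by rw [← star_eq_transpose_real]; exact hL2.eq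
  have hw : (Matrix.diagonal w)ᴴ = Matrix.diagonal w := by
    rw [Matrix.diagonal_conjTranspose]; congr 1
  rw [fromBlocks_conjTranspose]
  simp [Matrix.conjTranspose_add, hL1.eq, hL2.eq, hw, ht1, ht2]

end Supra

/-- Lower bound on the Laplacian spectral width (Lemma 8): with `M = max(λmax L1, λmax L2)`
and `w ≥ 0`, `∑ wᵢ = c`, one has `λₙ(L(w)) - λ₂(L(w)) ≥ M - 2c/N`; equality forces
`λₙ(L(w)) = M` and `λ₂(L(w)) = 2c/N`; and if moreover `λmax(L1) ≥ λmax(L2)`, `φ` is an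
eigenvector of `L1` for `λmax(L1)` with no zero entry, and `c > 0`, then the inequality is
strict. -/
theorem stmt18 (N : ℕ) (hN : 1 ≤ N)
    (L1 L2 : Matrix (Fin N) (Fin N) ℝ)
    (hL1 : L1.PosSemidef) (hL2 : L2.PosSemidef)
    (hL1e : L1 *ᵥ (fun _ => (1 : ℝ)) = 0) (hL2e : L2 *ᵥ (fun _ => (1 : ℝ)) = 0)
    (c : ℝ) (w : Fin N → ℝ) (hw : ∀ i, 0 ≤ w i) (hsum : ∑ i, w i = c) :
    let M : ℝ := max (sortedEigs L1 ⟨N - 1, by omega⟩) (sortedEigs L2 ⟨N - 1, by omega⟩)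
    let lamn : ℝ := sortedEigs (supraLap L1 L2 w) ⟨N + N - 1, by omega⟩
    let lam2 : ℝ := sortedEigs (supraLap L1 L2 w) ⟨1, by omega⟩
    (M - 2 * c / (N : ℝ) ≤ lamn - lam2) ∧
    (lamn - lam2 = M - 2 * c / (N : ℝ) → lamn = M ∧ lam2 = 2 * c / (N : ℝ)) ∧
    (sortedEigs L2 ⟨N - 1, by omega⟩ ≤ sortedEigs L1 ⟨N - 1, by omega⟩ →
      ∀ φ : Fin N → ℝ, L1 *ᵥ φ = sortedEigs L1 ⟨N - 1, by omega⟩ • φ →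
        (∀ i, φ i ≠ 0) → 0 < c → M - 2 * c / (N : ℝ) < lamn - lam2) := by
  intro M lamn lam2
  have hNpos : (0 : ℝ) < N := by exact_mod_cast hN
  have hherm : (supraLap L1 L2 w).IsHermitian := supraLap_isHermitian hL1.1 hL2.1
  have hc0 : 0 ≤ c := hsum ▸ Finset.sum_nonneg fun i _ => hw i
  -- λmax bounds
  have key1 : sortedEigs L1 ⟨N - 1, by omega⟩ ≤ lamn := by
    obtain ⟨u, hu, hnorm⟩ := exists_top_eigvec hL1.1 (by omega)
    have hq := supraLap_quad (L1 := L1) (L2 := L2) (w := w) u 0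
    have hq2 := quad_le_max hherm (m := N + N) (by omega) (pairVec u 0)
    have hn : pairVec u 0 ⬝ᵥ pairVec u 0 = 1 := by
      rw [pairVec_dot, hnorm]; simp
    have hwterm : 0 ≤ ∑ i, w i * (u i - (0 : Fin N → ℝ) i) ^ 2 :=
      Finset.sum_nonneg fun i _ => mul_nonneg (hw i) (sq_nonneg _)
    have hz : (0 : Fin N → ℝ) ⬝ᵥ (L2 *ᵥ (0 : Fin N → ℝ)) = 0 := by simp
    have hcs : u ⬝ᵥ (L1 *ᵥ u) = sortedEigs L1 ⟨N - 1, by omega⟩ := by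
      rw [hu, dotProduct_smul, smul_eq_mul, hnorm, mul_one]
    rw [hn, mul_one] at hq2
    rw [hq, hcs, hz] at hq2
    linarith
  have key2 : sortedEigs L2 ⟨N - 1, by omega⟩ ≤ lamn := by
    obtain ⟨u, hu, hnorm⟩ := exists_top_eigvec hL2.1 (by omega)
    have hq := supraLap_quad (L1 := L1) (L2 := L2) (w := w) 0 u
    have hq2 := quad_le_max hherm (m := N + N) (by omega) (pairVec 0 u)
    have hn : pairVec 0 u ⬝ᵥ pairVec 0 u = 1 := by
      rw [pairVec_dot, hnorm]; simp
    have hwterm : 0 ≤ ∑ i, w i * ((0 : Fin N → ℝ) i - u i) ^ 2 :=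
      Finset.sum_nonneg fun i _ => mul_nonneg (hw i) (sq_nonneg _)
    have hz : (0 : Fin N → ℝ) ⬝ᵥ (L1 *ᵥ (0 : Fin N → ℝ)) = 0 := by simp
    have hcs : u ⬝ᵥ (L2 *ᵥ u) = sortedEigs L2 ⟨N - 1, by omega⟩ := by
      rw [hu, dotProduct_smul, smul_eq_mul, hnorm, mul_one]
    rw [hn, mul_one] at hq2
    rw [hq, hcs, hz] at hq2
    linarith
  have keyM : M ≤ lamn := max_le key1 key2
  -- λ₂ bound
  have key3 : lam2 ≤ 2 * c / N := by
    apply second_le hherm (by omega) (pairVec (fun _ : Fin N => (1:ℝ)) (fun _ : Fin N => (1:ℝ)))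
      (pairVec (fun _ : Fin N => (1:ℝ)) (fun _ : Fin N => (-1:ℝ)))
    · intro a b h
      rw [pairVec_smul, pairVec_smul, pairVec_add] at h
      obtain ⟨h1, h2⟩ := pairVec_eq_zero h
      have e1 := congr_fun h1 ⟨0, by omega⟩
      have e2 := congr_fun h2 ⟨0, by omega⟩
      simp [Pi.smul_apply, smul_eq_mul] at e1 e2
      constructor <;> linarith
    · intro a b
      rw [pairVec_smul, pairVec_smul, pairVec_add]
      set x : Fin N → ℝ := a • (fun _ : Fin N => (1:ℝ)) + b • (fun _ : Fin N => (1:ℝ)) with hx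
      set y : Fin N → ℝ := a • (fun _ : Fin N => (1:ℝ)) + b • (fun _ : Fin N => (-1:ℝ)) with hy
      have hxv : x = fun _ => a + b := by funext i; simp [hx]
      have hyv : y = fun _ => a - b := by funext i; simp [hy]; ring
      rw [supraLap_quad, pairVec_dot]
      have hx1 : x ⬝ᵥ (L1 *ᵥ x) = 0 := by
        rw [hxv]
        have h1 : (fun _ : Fin N => a + b) = (a + b) • (fun _ : Fin N => (1 : ℝ)) := by
          funext i; simp
        rw [h1, mulVec_smul, hL1e, dotProduct_smul]
        simp
      have hy1 : y ⬝ᵥ (L2 *ᵥ y) = 0 := by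
        rw [hyv]
        have h1 : (fun _ : Fin N => a - b) = (a - b) • (fun _ : Fin N => (1 : ℝ)) := by
          funext i; simp
        rw [h1, mulVec_smul, hL2e, dotProduct_smul]
        simp
      have hsum2 : ∑ i, w i * (x i - y i) ^ 2 = 4 * b ^ 2 * c := by
        have hterm : ∀ i : Fin N, w i * (x i - y i) ^ 2 = 4 * b ^ 2 * w i := by
          intro i; simp only [hxv, hyv]; ring
        rw [Finset.sum_congr rfl fun i _ => hterm i, ← Finset.mul_sum, hsum]
      have hnorm2 : x ⬝ᵥ x + y ⬝ᵥ y = N * (a + b) ^ 2 + N * (a - b) ^ 2 := by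
        simp only [hxv, hyv, dotProduct]
        simp [Finset.sum_const, Finset.card_univ]
        ring
      rw [hx1, hy1, hsum2, hnorm2]
      have hscale : 2 * c / N * ((N : ℝ) * (a + b) ^ 2 + N * (a - b) ^ 2) =
          2 * c * ((a + b) ^ 2 + (a - b) ^ 2) := by
        field_simp
      rw [hscale]
      nlinarith [mul_nonneg hc0 (sq_nonneg a), mul_nonneg hc0 (sq_nonneg b)]
  refine ⟨by linarith, fun heq => ⟨by linarith, by linarith⟩, ?_⟩
  -- strict part
  intro hML φ hφ hφne hc
  have hM1 : M = sortedEigs L1 ⟨N - 1, by omega⟩ := max_eq_left hML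
  obtain ⟨i0, hi0⟩ : ∃ i, 0 < w i := by
    by_contra h; push_neg at h
    have h2 : ∑ i, w i ≤ 0 := Finset.sum_nonpos fun i _ => h i
    rw [hsum] at h2
    linarith
  have hq := supraLap_quad (L1 := L1) (L2 := L2) (w := w) φ 0
  have hphiL : φ ⬝ᵥ (L1 *ᵥ φ) = sortedEigs L1 ⟨N - 1, by omega⟩ * (φ ⬝ᵥ φ) := by
    rw [hφ, dotProduct_smul, smul_eq_mul]
  have hphipos : 0 < φ ⬝ᵥ φ := by
    refine lt_of_le_of_ne (dot_self_nonneg φ) fun h => ?_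
    exact hφne ⟨0, by omega⟩ (congr_fun ((dotProduct_self_eq_zero).mp h.symm) ⟨0, by omega⟩)
  have hwpos : 0 < ∑ i, w i * (φ i - (0 : Fin N → ℝ) i) ^ 2 := by
    have hle : w i0 * (φ i0 - (0 : Fin N → ℝ) i0) ^ 2 ≤
        ∑ i, w i * (φ i - (0 : Fin N → ℝ) i) ^ 2 :=
      Finset.single_le_sum (f := fun i => w i * (φ i - (0 : Fin N → ℝ) i) ^ 2)
        (fun i _ => mul_nonneg (hw i) (sq_nonneg _)) (Finset.mem_univ i0)
    have hpos : 0 < w i0 * (φ i0 - (0 : Fin N → ℝ) i0) ^ 2 := by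
      have h1 := hφne i0
      have h2 : φ i0 - (0 : Fin N → ℝ) i0 = φ i0 := by simp
      rw [h2]
      positivity
    linarith
  have hz : (0 : Fin N → ℝ) ⬝ᵥ (L2 *ᵥ (0 : Fin N → ℝ)) = 0 := by simp
  have hquadgt : M * (pairVec φ 0 ⬝ᵥ pairVec φ 0) <
      pairVec φ 0 ⬝ᵥ (supraLap L1 L2 w *ᵥ pairVec φ 0) := by
    rw [hq, pairVec_dot, hphiL, hz, hM1]
    have h0 : (0 : Fin N → ℝ) ⬝ᵥ (0 : Fin N → ℝ) = 0 := by simp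
    rw [h0, add_zero]
    linarith [hwpos]
  have hlt := lt_max_of_quad hherm (m := N + N) (by omega) (pairVec φ 0) M hquadgt
  have hlt2 : M < lamn := hlt
  linarith
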